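/- arXiv:1412.5229 — 6 statements merged into one kernel-verified Lean document; each statement's English description precedes it below -/
import Mathlib

section
/- Let 0 < a < b be reals, let α : [a,b] → (0,1) be continuously differentiable, and let β > -1. If x(t) = (ln(t/a))^β, then for every t ∈ (a,b] the left Hadamard–Marchaud fractional derivative of variable order α(t) satisfies ${}_a𝔻_t^{α(t)} x(t) = \frac{Γ(β+1)}{Γ(β-α(t)+1)} (\ln\frac{t}{a})^{β-α(t)}$. -/
open MeasureTheory Set

namespace HMAux

/-- bound for `u ^ r` on `[1/2, 1]`. -/
lemma rpow_le_of_half {r u : ℝ} (h1 : 1/2 ≤ u) (h2 : u ≤ 1) : u ^ r ≤ 2 ^ (-r) + 1 := by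
  have hu : (0:ℝ) < u := lt_of_lt_of_le (by norm_num) h1
  have h2r : (0:ℝ) < 2 ^ (-r) := Real.rpow_pos_of_pos (by norm_num) _
  rcases le_or_gt 0 r with hr | hr
  · have := Real.rpow_le_one hu.le h2 hr
    linarith
  · have hle : u ^ r ≤ (1/2 : ℝ) ^ r := Real.rpow_le_rpow_of_nonpos (by norm_num) h1 hr.le
    have he : ((1:ℝ)/2) ^ r = 2 ^ (-r) := by
      rw [one_div, Real.inv_rpow (by norm_num : (0:ℝ) ≤ 2), ← Real.rpow_neg (by norm_num)]
    linarith [he ▸ hle]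

lemma intInt_one_sub {s : ℝ} (hs : -1 < s) :
    IntervalIntegrable (fun u : ℝ => (1-u) ^ s) volume (1/2) 1 := by
  have h := (intervalIntegral.intervalIntegrable_rpow' (a := 0) (b := 1/2) hs).comp_sub_left 1
  norm_num at h
  exact h.symm

lemma integrableOn_one_sub_Ico {s : ℝ} (hs : -1 < s) :
    IntegrableOn (fun u : ℝ => (1-u) ^ s) (Ico (1/2 : ℝ) 1) volume := by
  rw [integrableOn_Ico_iff_integrableOn_Ioo]
  have := (intervalIntegrable_iff_integrableOn_Ioc_of_le (by norm_num : (1:ℝ)/2 ≤ 1)).1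
    (intInt_one_sub hs)
  rwa [integrableOn_Ioc_iff_integrableOn_Ioo] at this

lemma integrableOn_rpow_Ioo {r : ℝ} (hr : -1 < r) :
    IntegrableOn (fun u : ℝ => u ^ r) (Ioo (0 : ℝ) (1/2)) volume := by
  have := (intervalIntegrable_iff_integrableOn_Ioc_of_le (by norm_num : (0:ℝ) ≤ 1/2)).1
    (intervalIntegral.intervalIntegrable_rpow' hr)
  rwa [integrableOn_Ioc_iff_integrableOn_Ioo] at this

lemma half_bound_one_sub {A u : ℝ} (hA0 : 0 < A) (hu : u ≤ 1/2) (hu0 : 0 ≤ u) :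
    (1 - u) ^ (-A) ≤ 2 ^ A := by
  have h : (1 - u) ^ (-A) ≤ ((1:ℝ)/2) ^ (-A) :=
    Real.rpow_le_rpow_of_nonpos (by norm_num) (by linarith) (by linarith)
  have he : ((1:ℝ)/2) ^ (-A) = 2 ^ A := by
    rw [one_div, Real.inv_rpow (by norm_num : (0:ℝ) ≤ 2), ← Real.rpow_neg (by norm_num),
      neg_neg]
  linarith [he ▸ h]

/-- Integrability of the Beta-type integrand. -/
lemma integrable_B {A β : ℝ} (hβ : -1 < β) (hA0 : 0 < A) (hA1 : A < 1) :
    IntervalIntegrable (fun u : ℝ => u ^ β * (1-u) ^ (-A)) volume 0 1 := by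
  rw [intervalIntegrable_iff_integrableOn_Ioc_of_le zero_le_one,
    integrableOn_Ioc_iff_integrableOn_Ioo,
    show Ioo (0:ℝ) 1 = Ioo 0 (1/2) ∪ Ico (1/2) 1 from
      (Ioo_union_Ico_eq_Ioo (by norm_num) (by norm_num)).symm]
  refine IntegrableOn.union ?_ ?_
  · refine Integrable.mono' ((integrableOn_rpow_Ioo hβ).const_mul ((2:ℝ) ^ A)) ?_ ?_
    · refine (ContinuousOn.mul ?_ ?_).aestronglyMeasurable measurableSet_Ioo
      · exact continuousOn_id.rpow_const fun x hx => Or.inl (ne_of_gt hx.1)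
      · exact (continuousOn_const.sub continuousOn_id).rpow_const
          fun x hx => Or.inl (by simp only [Pi.sub_apply, id]; intro h; nlinarith [hx.2])
    · refine (ae_restrict_iff' measurableSet_Ioo).2 (Filter.Eventually.of_forall ?_)
      intro u hu
      have h1 : 0 ≤ u ^ β := Real.rpow_nonneg hu.1.le _
      have h2 : (0:ℝ) ≤ (1-u) ^ (-A) := Real.rpow_nonneg (by linarith [hu.2]) _
      rw [Real.norm_eq_abs, abs_of_nonneg (mul_nonneg h1 h2)]
      calc u ^ β * (1-u) ^ (-A) ≤ u ^ β * 2 ^ A :=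
            mul_le_mul_of_nonneg_left (half_bound_one_sub hA0 hu.2.le hu.1.le) h1
        _ = 2 ^ A * u ^ β := by ring
  · refine Integrable.mono' ((integrableOn_one_sub_Ico (by linarith : (-1:ℝ) < -A)).const_mul
      ((2:ℝ) ^ (-β) + 1)) ?_ ?_
    · refine (ContinuousOn.mul ?_ ?_).aestronglyMeasurable measurableSet_Ico
      · exact continuousOn_id.rpow_const fun x hx =>
          Or.inl (by simp only [id]; intro h; rw [h] at hx; norm_num at hx)
      · exact (continuousOn_const.sub continuousOn_id).rpow_const
          fun x hx => Or.inl (by simp only [Pi.sub_apply, id]; intro h; nlinarith [hx.2])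
    · refine (ae_restrict_iff' measurableSet_Ico).2 (Filter.Eventually.of_forall ?_)
      intro u hu
      have hu0 : (0:ℝ) < u := lt_of_lt_of_le (by norm_num) hu.1
      have h2 : (0:ℝ) ≤ (1-u) ^ (-A) := Real.rpow_nonneg (by linarith [hu.2]) _
      rw [Real.norm_eq_abs, abs_of_nonneg (mul_nonneg (Real.rpow_nonneg hu0.le _) h2)]
      exact mul_le_mul_of_nonneg_right (rpow_le_of_half hu.1 hu.2.le) h2

/-- Integrability of the Marchaud-type integrand. -/
lemma integrable_J {A β : ℝ} (hβ : -1 < β) (hA0 : 0 < A) (hA1 : A < 1) :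
    IntervalIntegrable (fun u : ℝ => (1 - u ^ β) * (1-u) ^ (-A-1)) volume 0 1 := by
  rw [intervalIntegrable_iff_integrableOn_Ioc_of_le zero_le_one,
    integrableOn_Ioc_iff_integrableOn_Ioo,
    show Ioo (0:ℝ) 1 = Ioo 0 (1/2) ∪ Ico (1/2) 1 from
      (Ioo_union_Ico_eq_Ioo (by norm_num) (by norm_num)).symm]
  have hcont : ∀ (S : Set ℝ), (∀ x ∈ S, 0 < x) → (∀ x ∈ S, x < 1) →
      ContinuousOn (fun u : ℝ => (1 - u ^ β) * (1-u) ^ (-A-1)) S := by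
    intro S hS0 hS1
    refine ContinuousOn.mul (continuousOn_const.sub ?_) ?_
    · exact continuousOn_id.rpow_const fun x hx => Or.inl (ne_of_gt (hS0 x hx))
    · exact (continuousOn_const.sub continuousOn_id).rpow_const
        fun x hx => Or.inl (by simp only [Pi.sub_apply, id]; intro h; nlinarith [hS1 x hx])
  refine IntegrableOn.union ?_ ?_
  · -- near 0 : |1 - u^β| ≤ 1 + u^β and (1-u)^(-A-1) ≤ 2^(A+1)
    have hone : IntegrableOn (fun _ : ℝ => (1:ℝ)) (Ioo 0 (1/2)) volume :=
      integrableOn_const (by simp)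
    refine Integrable.mono' (((hone.add (integrableOn_rpow_Ioo hβ)).const_mul
      ((2:ℝ) ^ (A+1))) : IntegrableOn (fun u : ℝ => 2 ^ (A+1) * (1 + u ^ β)) _ _) ?_ ?_
    · exact (hcont _ (fun x hx => hx.1) (fun x hx => by linarith [hx.2])).aestronglyMeasurable
        measurableSet_Ioo
    · refine (ae_restrict_iff' measurableSet_Ioo).2 (Filter.Eventually.of_forall ?_)
      intro u hu
      have h1u : (0:ℝ) < 1 - u := by linarith [hu.2]
      have h2 : (0:ℝ) ≤ (1-u) ^ (-A-1) := Real.rpow_nonneg h1u.le _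
      have hb1 : |1 - u ^ β| ≤ 1 + u ^ β := by
        have h0 : (0:ℝ) ≤ u ^ β := Real.rpow_nonneg hu.1.le _
        exact abs_le.2 ⟨by linarith, by linarith⟩
      have hb2 : (1-u) ^ (-A-1) ≤ 2 ^ (A+1) := by
        have h : (1 - u) ^ (-A-1) ≤ ((1:ℝ)/2) ^ (-A-1) :=
          Real.rpow_le_rpow_of_nonpos (by norm_num) (by linarith [hu.2]) (by linarith)
        have he : ((1:ℝ)/2) ^ (-A-1) = 2 ^ (A+1) := by
          rw [one_div, Real.inv_rpow (by norm_num : (0:ℝ) ≤ 2), ← Real.rpow_neg (by norm_num)]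
          congr 1; ring
        linarith [he ▸ h]
      rw [Real.norm_eq_abs, abs_mul, abs_of_nonneg h2]
      calc |1 - u ^ β| * (1-u) ^ (-A-1) ≤ (1 + u ^ β) * (2 ^ (A+1)) := by
            apply mul_le_mul hb1 hb2 h2 (by linarith [Real.rpow_nonneg hu.1.le β])
        _ = 2 ^ (A+1) * (1 + u ^ β) := by ring
  · -- near 1 : |1 - u^β| ≤ C * (1-u)
    set C : ℝ := |β| * (2 ^ (1-β) + 1) with hC
    have hC0 : 0 ≤ C := by positivity
    have hMVT : ∀ u ∈ Icc (1/2 : ℝ) 1, |1 - u ^ β| ≤ C * (1 - u) := by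
      intro u hu
      have key := Convex.norm_image_sub_le_of_norm_hasDerivWithin_le
        (f := fun x : ℝ => x ^ β) (f' := fun x : ℝ => β * x ^ (β - 1))
        (s := Icc (1/2 : ℝ) 1) (C := C)
        (fun x hx => (Real.hasDerivAt_rpow_const
          (Or.inl (by intro h; rw [h] at hx; norm_num at hx))).hasDerivWithinAt)
        (fun x hx => by
          have hx0 : (0:ℝ) < x := lt_of_lt_of_le (by norm_num) hx.1
          have hb : x ^ (β - 1) ≤ 2 ^ (-(β-1)) + 1 := rpow_le_of_half hx.1 hx.2
          have : ‖β * x ^ (β-1)‖ = |β| * x ^ (β-1) := by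
            rw [norm_mul, Real.norm_eq_abs, Real.norm_eq_abs,
              abs_of_nonneg (Real.rpow_nonneg hx0.le _)]
          rw [this, hC]
          have h2 : -(β - 1) = 1 - β := by ring
          exact mul_le_mul_of_nonneg_left (by rw [← h2]; exact hb) (abs_nonneg β))
        (convex_Icc _ _) hu (right_mem_Icc.2 (by norm_num))
      simp only [Real.one_rpow, Real.norm_eq_abs] at key
      calc |1 - u ^ β| ≤ C * |1 - u| := key
        _ = C * (1 - u) := by rw [abs_of_nonneg (by linarith [hu.2])]
    refine Integrable.mono' ((integrableOn_one_sub_Ico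
      (by linarith : (-1:ℝ) < -A)).const_mul C) ?_ ?_
    · exact (hcont _ (fun x hx => lt_of_lt_of_le (by norm_num) hx.1)
        (fun x hx => hx.2)).aestronglyMeasurable measurableSet_Ico
    · refine (ae_restrict_iff' measurableSet_Ico).2 (Filter.Eventually.of_forall ?_)
      intro u hu
      have h1u : (0:ℝ) < 1 - u := by linarith [hu.2]
      have h2 : (0:ℝ) ≤ (1-u) ^ (-A-1) := Real.rpow_nonneg h1u.le _
      rw [Real.norm_eq_abs, abs_mul, abs_of_nonneg h2]
      calc |1 - u ^ β| * (1-u) ^ (-A-1) ≤ (C * (1-u)) * (1-u) ^ (-A-1) :=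
            mul_le_mul_of_nonneg_right (hMVT u ⟨hu.1, hu.2.le⟩) h2
        _ = C * ((1-u) ^ (1:ℝ) * (1-u) ^ (-A-1)) := by rw [Real.rpow_one]; ring
        _ = C * (1-u) ^ (-A) := by rw [← Real.rpow_add h1u]; norm_num



/-- slope limit: `((1-u)^p - 1)/u → -p` as `u → 0`. -/
lemma slope_zero (p : ℝ) :
    Filter.Tendsto (fun u : ℝ => ((1-u) ^ p - 1) / u) (nhdsWithin 0 (Ioi 0)) (nhds (-p)) := by
  have hd : HasDerivAt (fun u : ℝ => (1-u) ^ p) (-p) 0 := by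
    have h1 : HasDerivAt (fun u : ℝ => 1 - u) (-1) (0:ℝ) := (hasDerivAt_id (0:ℝ)).const_sub 1
    have h2 : HasDerivAt (fun x : ℝ => x ^ p) (p * ((1:ℝ) - 0) ^ (p-1)) ((1:ℝ) - 0) :=
      Real.hasDerivAt_rpow_const (Or.inl (by norm_num))
    have h3 := h2.comp (0:ℝ) h1
    simpa [Function.comp_def, Real.one_rpow] using h3
  have h3 := hasDerivAt_iff_tendsto_slope.1 hd
  have h4 : Filter.Tendsto (slope (fun u : ℝ => (1-u) ^ p) 0)
      (nhdsWithin 0 (Ioi 0)) (nhds (-p)) :=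
    h3.mono_left (nhdsWithin_mono 0 (fun x hx => ne_of_gt hx))
  refine h4.congr fun u => ?_
  rw [slope_def_field]
  norm_num [Real.one_rpow]

/-- slope limit at 1: `(u^β - 1)/(u - 1) → β` as `u → 1`. -/
lemma slope_one (β : ℝ) :
    Filter.Tendsto (fun u : ℝ => (u ^ β - 1) / (u - 1)) (nhdsWithin 1 (Iio 1)) (nhds β) := by
  have hd : HasDerivAt (fun u : ℝ => u ^ β) β 1 := by
    simpa [Real.one_rpow] using Real.hasDerivAt_rpow_const (x := (1:ℝ)) (p := β)
      (Or.inl one_ne_zero)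
  have h3 := hasDerivAt_iff_tendsto_slope.1 hd
  have h4 := h3.mono_left (nhdsWithin_mono 1 (fun x (hx : x ∈ Iio 1) => ne_of_lt hx))
  refine h4.congr fun u => ?_
  rw [slope_def_field]
  norm_num [Real.one_rpow]

/-- The key scalar identity. -/
lemma key_identity {A β : ℝ} (hβ : -1 < β) (hA0 : 0 < A) (hA1 : A < 1) :
    A * (∫ u in (0:ℝ)..1, (1 - u ^ β) * (1-u) ^ (-A-1)) + 1
      = (β + 1 - A) * ∫ u in (0:ℝ)..1, u ^ β * (1-u) ^ (-A) := by
  set χ : ℝ → ℝ := fun u => (1 - u ^ β) * (1-u) ^ (-A) + u ^ β * (1-u) ^ (1-A) with hχ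
  have hder : ∀ u ∈ Ioo (0:ℝ) 1, HasDerivAt χ
      (A * ((1 - u ^ β) * (1-u) ^ (-A-1)) - (β + 1 - A) * (u ^ β * (1-u) ^ (-A))) u := by
    intro u hu
    have hu0 : (0:ℝ) < u := hu.1
    have h1u : (0:ℝ) < 1 - u := by linarith [hu.2]
    have d1 : HasDerivAt (fun u : ℝ => u ^ β) (β * u ^ (β-1)) u :=
      Real.hasDerivAt_rpow_const (Or.inl hu0.ne')
    have dsub : HasDerivAt (fun u : ℝ => 1 - u) (-1) u := (hasDerivAt_id u).const_sub 1
    have d2 : HasDerivAt (fun u : ℝ => (1-u) ^ (-A)) ((-A) * (1-u) ^ (-A-1) * (-1)) u := by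
      exact (Real.hasDerivAt_rpow_const (x := 1-u) (p := -A) (Or.inl h1u.ne')).comp u
        (by simpa using dsub)
    have d3 : HasDerivAt (fun u : ℝ => (1-u) ^ (1-A)) ((1-A) * (1-u) ^ (1-A-1) * (-1)) u := by
      exact (Real.hasDerivAt_rpow_const (x := 1-u) (p := 1-A) (Or.inl h1u.ne')).comp u
        (by simpa using dsub)
    have dχ := ((d1.const_sub 1).mul d2).add (d1.mul d3)
    have e1 : u ^ (β-1) = u ^ β / u := by
      rw [Real.rpow_sub hu0, Real.rpow_one]
    have e2 : (1-u) ^ (1-A) = (1-u) * (1-u) ^ (-A) := by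
      rw [show (1:ℝ)-A = 1 + -A by ring, Real.rpow_add h1u, Real.rpow_one]
    have e3 : (1-u) ^ (-A-1) = (1-u) ^ (-A) / (1-u) := by
      rw [Real.rpow_sub h1u, Real.rpow_one]
    have e4 : (1-u) ^ (1-A-1) = (1-u) ^ (-A) := by norm_num
    refine dχ.congr_deriv ?_
    rw [e4, e2, e3, e1]
    field_simp
    ring
  have hχ0 : χ 0 = 1 := by
    simp only [hχ, sub_zero, Real.one_rpow, mul_one]
    ring
  have hχ1 : χ 1 = 0 := by
    simp only [hχ, Real.one_rpow, sub_self, zero_mul, one_mul, zero_add]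
    rw [Real.zero_rpow (by linarith : (1:ℝ) - A ≠ 0)]
  have hcont : ContinuousOn χ (Icc 0 1) := by
    intro x hx
    rcases eq_or_lt_of_le hx.1 with h0 | h0
    · -- x = 0
      have T0 : Filter.Tendsto χ (nhdsWithin 0 (Ioi 0)) (nhds 1) := by
        have e1 : Filter.Tendsto (fun u : ℝ => u ^ (β+1)) (nhdsWithin 0 (Ioi 0)) (nhds 0) := by
          have c : ContinuousAt (fun u : ℝ => u ^ (β+1)) 0 :=
            Real.continuousAt_rpow_const 0 _ (Or.inr (by linarith))
          have hv : (0:ℝ) ^ (β+1) = 0 := Real.zero_rpow (by linarith)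
          have := c.tendsto.mono_left (nhdsWithin_le_nhds (s := Ioi (0:ℝ)))
          rwa [hv] at this
        have e2 : Filter.Tendsto (fun u : ℝ => (1-u) ^ (-A) - 1)
            (nhdsWithin 0 (Ioi 0)) (nhds 0) := by
          have c : ContinuousAt (fun u : ℝ => (1-u) ^ (-A) - 1) 0 := by
            refine ContinuousAt.sub ?_ continuousAt_const
            exact ((continuous_const.sub continuous_id).continuousAt).rpow_const
              (Or.inl (by norm_num))
          have := c.tendsto.mono_left (nhdsWithin_le_nhds (s := Ioi (0:ℝ)))
          simpa [Real.one_rpow] using this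
        have comb : Filter.Tendsto (fun u : ℝ =>
            1 + ((1-u) ^ (-A) - 1) - u ^ (β+1) * (((1-u) ^ (-A) - 1) / u)
              + u ^ (β+1) * (((1-u) ^ (1-A) - 1) / u))
            (nhdsWithin 0 (Ioi 0)) (nhds 1) := by
          have hc : Filter.Tendsto (fun _ : ℝ => (1:ℝ)) (nhdsWithin 0 (Ioi 0)) (nhds 1) :=
            tendsto_const_nhds
          have := ((hc.add e2).sub (e1.mul (slope_zero (-A)))).add
            (e1.mul (slope_zero (1-A)))
          simpa using this
        refine comb.congr' ?_
        filter_upwards [self_mem_nhdsWithin] with u (hu : u ∈ Ioi (0:ℝ))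
        have hu0 : (0:ℝ) < u := hu
        have epow : u ^ (β+1) = u ^ β * u := by
          rw [Real.rpow_add hu0, Real.rpow_one]
        simp only [hχ]
        rw [epow]
        field_simp
        ring
      have : ContinuousWithinAt χ (Ici (0:ℝ)) 0 := by
        rw [← continuousWithinAt_Ioi_iff_Ici]
        unfold ContinuousWithinAt
        rwa [hχ0]
      rw [← h0]
      exact (this.mono (Icc_subset_Ici_self)).mono (by intro y hy; exact hy)
    rcases eq_or_lt_of_le hx.2 with h1 | h1
    · -- x = 1
      have T1 : Filter.Tendsto χ (nhdsWithin 1 (Iio 1)) (nhds 0) := by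
        have e3 : Filter.Tendsto (fun u : ℝ => (1-u) ^ (1-A)) (nhdsWithin 1 (Iio 1)) (nhds 0) := by
          have c : ContinuousAt (fun u : ℝ => (1-u) ^ (1-A)) 1 := by
            exact ((continuous_const.sub continuous_id).continuousAt).rpow_const
              (Or.inr (by linarith))
          have := c.tendsto.mono_left (nhdsWithin_le_nhds (s := Iio (1:ℝ)))
          simpa [Real.zero_rpow (by linarith : (1:ℝ) - A ≠ 0)] using this
        have e4 : Filter.Tendsto (fun u : ℝ => u ^ β) (nhdsWithin 1 (Iio 1)) (nhds 1) := by
          have c : ContinuousAt (fun u : ℝ => u ^ β) 1 :=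
            Real.continuousAt_rpow_const 1 _ (Or.inl one_ne_zero)
          have := c.tendsto.mono_left (nhdsWithin_le_nhds (s := Iio (1:ℝ)))
          simpa [Real.one_rpow] using this
        have comb : Filter.Tendsto (fun u : ℝ =>
            ((u ^ β - 1) / (u - 1)) * (1-u) ^ (1-A) + u ^ β * (1-u) ^ (1-A))
            (nhdsWithin 1 (Iio 1)) (nhds 0) := by
          have := ((slope_one β).mul e3).add (e4.mul e3)
          simpa using this
        refine comb.congr' ?_
        filter_upwards [self_mem_nhdsWithin] with u (hu : u ∈ Iio (1:ℝ))
        have h1u : (0:ℝ) < 1 - u := by simpa [sub_pos] using hu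
        have e2 : (1-u) ^ (1-A) = (1-u) * (1-u) ^ (-A) := by
          rw [show (1:ℝ)-A = 1 + -A by ring, Real.rpow_add h1u, Real.rpow_one]
        simp only [hχ]
        rw [e2]
        have hne : u - 1 ≠ 0 := by intro h; apply h1u.ne'; linarith
        field_simp
        ring
      have : ContinuousWithinAt χ (Iic (1:ℝ)) 1 := by
        rw [← continuousWithinAt_Iio_iff_Iic]
        unfold ContinuousWithinAt
        rwa [hχ1]
      rw [h1]
      exact this.mono (Icc_subset_Iic_self)
    · exact ((hder x ⟨h0, h1⟩).continuousAt).continuousWithinAt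
  have hint : IntervalIntegrable (fun u : ℝ =>
      A * ((1 - u ^ β) * (1-u) ^ (-A-1)) - (β + 1 - A) * (u ^ β * (1-u) ^ (-A)))
      volume 0 1 :=
    ((integrable_J hβ hA0 hA1).const_mul A).sub ((integrable_B hβ hA0 hA1).const_mul _)
  have hFTC := intervalIntegral.integral_eq_sub_of_hasDeriv_right_of_le zero_le_one hcont
    (fun x hx => (hder x hx).hasDerivWithinAt) hint
  rw [hχ0, hχ1] at hFTC
  rw [intervalIntegral.integral_sub ((integrable_J hβ hA0 hA1).const_mul A)
    ((integrable_B hβ hA0 hA1).const_mul _), intervalIntegral.integral_const_mul,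
    intervalIntegral.integral_const_mul] at hFTC
  linarith [hFTC]

/-- Real Beta integral. -/
lemma beta_real {p q : ℝ} (hp : 0 < p) (hq : 0 < q) :
    ∫ u in (0:ℝ)..1, u ^ (p-1) * (1-u) ^ (q-1)
      = Real.Gamma p * Real.Gamma q / Real.Gamma (p+q) := by
  have h := Complex.Gamma_mul_Gamma_eq_betaIntegral (s := (p:ℂ)) (t := (q:ℂ))
    (by simpa using hp) (by simpa using hq)
  have hb : Complex.betaIntegral p q
      = ((∫ u in (0:ℝ)..1, u ^ (p-1) * (1-u) ^ (q-1) : ℝ) : ℂ) := by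
    rw [Complex.betaIntegral, ← intervalIntegral.integral_ofReal]
    refine intervalIntegral.integral_congr fun x hx => ?_
    rw [uIcc_of_le zero_le_one] at hx
    rw [Complex.ofReal_mul, Complex.ofReal_cpow hx.1, Complex.ofReal_cpow (by linarith [hx.2])]
    push_cast
    ring
  rw [hb] at h
  have hGpq : Complex.Gamma ((p:ℂ) + q) = ((Real.Gamma (p+q) : ℝ) : ℂ) := by
    rw [← Complex.ofReal_add, Complex.Gamma_ofReal]
  rw [Complex.Gamma_ofReal, Complex.Gamma_ofReal, hGpq] at h
  have h2 : (((Real.Gamma p * Real.Gamma q : ℝ)) : ℂ)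
      = ((Real.Gamma (p+q) * ∫ u in (0:ℝ)..1, u ^ (p-1) * (1-u) ^ (q-1) : ℝ) : ℂ) := by
    push_cast
    exact h
  have h3 := Complex.ofReal_injective h2
  have hne : Real.Gamma (p+q) ≠ 0 := (Real.Gamma_pos_of_pos (by linarith)).ne'
  field_simp
  linarith [h3]

end HMAux

/-- The left Hadamard–Marchaud fractional derivative of variable order `α t`. -/
noncomputable def hadamardMarchaud (a : ℝ) (α : ℝ → ℝ) (x : ℝ → ℝ) (t : ℝ) : ℝ :=
  (x t / Real.Gamma (1 - α t)) * (Real.log (t / a)) ^ (-(α t)) +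
  (α t / Real.Gamma (1 - α t)) *
    ∫ τ in a..t, ((x t - x τ) / τ) * (Real.log (t / τ)) ^ (-(α t) - 1)

theorem hadamard_marchaud_of_log_rpow
    (a b : ℝ) (ha : 0 < a) (hab : a < b)
    (α : ℝ → ℝ) (hα : ContDiffOn ℝ 1 α (Set.Icc a b))
    (hα01 : ∀ t ∈ Set.Icc a b, α t ∈ Set.Ioo (0 : ℝ) 1)
    (β : ℝ) (hβ : -1 < β) :
    ∀ t ∈ Set.Ioc a b,
      hadamardMarchaud a α (fun s => (Real.log (s / a)) ^ β) t =
        (Real.Gamma (β + 1) / Real.Gamma (β - α t + 1)) *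
          (Real.log (t / a)) ^ (β - α t) := by
  intro t ht
  obtain ⟨hat, htb⟩ := ht
  obtain ⟨hA0, hA1⟩ := hα01 t ⟨hat.le, htb⟩
  have ht0 : 0 < t := lt_trans ha hat
  have hL : 0 < Real.log (t / a) := Real.log_pos ((one_lt_div ha).2 hat)
  simp only [hadamardMarchaud]
  set A := α t with hAdef
  set L := Real.log (t / a) with hLdef
  set g : ℝ → ℝ := fun u => a * Real.exp (L * u) with hgdef
  have hgpos : ∀ u : ℝ, 0 < g u := fun u => by simp only [hgdef]; positivity
  have hg1 : g 1 = t := by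
    simp only [hgdef, mul_one]
    rw [hLdef, Real.exp_log (by positivity)]
    field_simp
  have hgder : ∀ u ∈ Ioo (0:ℝ) 1, HasDerivWithinAt g (L * g u) (Ioo 0 1) u := by
    intro u _
    have h1 : HasDerivAt (fun x : ℝ => L * x) L u := by
      simpa using (hasDerivAt_id u).const_mul L
    have h2 : HasDerivAt (fun x : ℝ => Real.exp (L * x)) (Real.exp (L * u) * L) u := by
      have := (Real.hasDerivAt_exp (L * u)).comp u h1
      simpa [Function.comp_def] using this
    have h3 := h2.const_mul a
    have h4 : a * (Real.exp (L * u) * L) = L * g u := by simp only [hgdef]; ring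
    rw [h4] at h3
    exact h3.hasDerivWithinAt
  have hinj : InjOn g (Ioo 0 1) := by
    intro u _ v _ h
    simp only [hgdef] at h
    have h2 : Real.exp (L * u) = Real.exp (L * v) := mul_left_cancel₀ ha.ne' h
    exact mul_left_cancel₀ hL.ne' (Real.exp_injective h2)
  have himg : g '' (Ioo 0 1) = Ioo a t := by
    ext τ
    constructor
    · rintro ⟨u, hu, rfl⟩
      have h1 : (1:ℝ) < Real.exp (L * u) := by
        rw [← Real.exp_zero]
        exact Real.exp_lt_exp.2 (mul_pos hL hu.1)
      have h2 : Real.exp (L * u) < Real.exp (L * 1) :=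
        Real.exp_lt_exp.2 (by nlinarith [hu.2])
      constructor
      · simp only [hgdef]; nlinarith
      · rw [← hg1]; simp only [hgdef]; nlinarith
    · intro hτ
      have hτ0 : 0 < τ := lt_trans ha hτ.1
      refine ⟨Real.log (τ / a) / L, ⟨?_, ?_⟩, ?_⟩
      · exact div_pos (Real.log_pos ((one_lt_div ha).2 hτ.1)) hL
      · rw [div_lt_one hL, hLdef]
        exact Real.log_lt_log (by positivity) (by gcongr; exact hτ.2)
      · simp only [hgdef]
        rw [mul_comm L _, div_mul_cancel₀ _ hL.ne', Real.exp_log (by positivity)]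
        field_simp
  have hCoV : (∫ τ in a..t, (L ^ β - Real.log (τ / a) ^ β) / τ * Real.log (t / τ) ^ (-A - 1))
      = L ^ (β - A) * ∫ u in (0:ℝ)..1, (1 - u ^ β) * (1-u) ^ (-A-1) := by
    rw [intervalIntegral.integral_of_le hat.le, integral_Ioc_eq_integral_Ioo, ← himg,
      integral_image_eq_integral_abs_deriv_smul measurableSet_Ioo hgder hinj]
    rw [show (∫ u in (0:ℝ)..1, (1 - u ^ β) * (1-u) ^ (-A-1))
        = ∫ u in Ioo (0:ℝ) 1, (1 - u ^ β) * (1-u) ^ (-A-1) by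
      rw [intervalIntegral.integral_of_le zero_le_one, integral_Ioc_eq_integral_Ioo]]
    rw [← integral_const_mul]
    refine setIntegral_congr_fun measurableSet_Ioo fun u hu => ?_
    have hgu := hgpos u
    have h1u : (0:ℝ) < 1 - u := by linarith [hu.2]
    have hlog1 : Real.log (g u / a) = L * u := by
      simp only [hgdef]
      rw [mul_div_cancel_left₀ _ ha.ne', Real.log_exp]
    have hLsplit : L = Real.log t - Real.log a := by
      rw [hLdef, Real.log_div ht0.ne' ha.ne']
    have hlog2 : Real.log (t / g u) = L * (1 - u) := by
      rw [Real.log_div ht0.ne' (hgpos u).ne']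
      simp only [hgdef]
      rw [Real.log_mul ha.ne' (Real.exp_pos _).ne', Real.log_exp, hLsplit]
      ring
    have e1 : Real.log (t / g u) ^ (-A-1) = L ^ (-A-1) * (1-u) ^ (-A-1) := by
      rw [hlog2, Real.mul_rpow hL.le h1u.le]
    have e2 : Real.log (g u / a) ^ β = L ^ β * u ^ β := by
      rw [hlog1, Real.mul_rpow hL.le hu.1.le]
    rw [smul_eq_mul, abs_of_pos (mul_pos hL hgu), e1, e2]
    rw [show L ^ (β - A) = L * L ^ β * L ^ (-A-1) by
      rw [show β - A = 1 + β + (-A-1) by ring, Real.rpow_add hL, Real.rpow_add hL,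
        Real.rpow_one]]
    field_simp
  rw [hCoV]
  have hBint : (∫ u in (0:ℝ)..1, u ^ β * (1-u) ^ (-A))
      = Real.Gamma (β+1) * Real.Gamma (1-A) / Real.Gamma (β+1+(1-A)) := by
    rw [← HMAux.beta_real (by linarith : (0:ℝ) < β+1) (by linarith : (0:ℝ) < 1-A)]
    refine intervalIntegral.integral_congr fun x _ => ?_
    norm_num
  have hkey := HMAux.key_identity (A := A) (β := β) hβ hA0 hA1
  rw [hBint] at hkey
  have hG1A : (0:ℝ) < Real.Gamma (1-A) := Real.Gamma_pos_of_pos (by linarith)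
  set J := ∫ u in (0:ℝ)..1, (1 - u ^ β) * (1-u) ^ (-A-1) with hJdef
  have hform : L ^ β / Real.Gamma (1-A) * L ^ (-A) + A / Real.Gamma (1-A) * (L ^ (β - A) * J)
      = L ^ (β - A) * (1 + A * J) / Real.Gamma (1-A) := by
    rw [show L ^ (β - A) = L ^ β * L ^ (-A) by rw [← Real.rpow_add hL, sub_eq_add_neg]]
    field_simp
  rw [hform]
  rcases eq_or_ne (β + 1 - A) 0 with hs | hs
  · rw [show β - A + 1 = 0 by linarith, Real.Gamma_zero, div_zero, zero_mul]
    rw [hs, zero_mul] at hkey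
    rw [show (1:ℝ) + A * J = 0 by linarith, mul_zero, zero_div]
  · have hΓs : Real.Gamma (β + 1 - A) ≠ 0 := by
      refine Real.Gamma_ne_zero fun m => ?_
      rcases Nat.eq_zero_or_pos m with hm | hm
      · subst hm; simpa using hs
      · have hm1 : (1:ℝ) ≤ (m:ℝ) := by exact_mod_cast hm
        intro hEq
        have hgt : -1 < β + 1 - A := by linarith
        rw [hEq] at hgt
        linarith
    rw [show β + 1 + (1 - A) = (β + 1 - A) + 1 by ring, Real.Gamma_add_one hs] at hkey
    rw [show β - A + 1 = β + 1 - A by ring]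
    rw [show (1:ℝ) + A * J = (β + 1 - A) * (Real.Gamma (β+1) * Real.Gamma (1-A) /
      ((β + 1 - A) * Real.Gamma (β + 1 - A))) by linarith]
    field_simp
end

section
/- Let 0 < a < b be reals, let α : [a,b] → (0,1) be continuously differentiable, and let x : [a,b] → ℝ be continuously differentiable. Then for every t ∈ (a,b] the left Hadamard–Marchaud fractional derivative of variable order admits the integration-by-parts representation ${}_a𝔻_t^{α(t)} x(t) = \frac{x(a)}{Γ(1-α(t))}(\ln\frac{t}{a})^{-α(t)} + \frac{1}{Γ(1-α(t))} \int_a^t (\ln\frac{t}{τ})^{-α(t)} x'(τ)\, dτ$. -/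
open MeasureTheory Set Filter Topology

theorem hadamard_marchaud_parts_repr
    (a b : ℝ) (ha : 0 < a) (hab : a < b)
    (α : ℝ → ℝ) (hα : ContDiffOn ℝ 1 α (Set.Icc a b))
    (hα01 : ∀ t ∈ Set.Icc a b, α t ∈ Set.Ioo (0 : ℝ) 1)
    (x : ℝ → ℝ) (hx : ContDiffOn ℝ 1 x (Set.Icc a b)) :
    ∀ t ∈ Set.Ioc a b,
      hadamardMarchaud a α x t =
        (x a / Real.Gamma (1 - α t)) * (Real.log (t / a)) ^ (-(α t)) +
        (1 / Real.Gamma (1 - α t)) *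
          ∫ τ in a..t, (Real.log (t / τ)) ^ (-(α t)) * deriv x τ := by
  intro t ht
  obtain ⟨hat, htb⟩ := ht
  have ht0 : 0 < t := ha.trans hat
  have htm : t ∈ Set.Icc a b := ⟨hat.le, htb⟩
  obtain ⟨hβ0, hβ1⟩ := hα01 t htm
  set β := α t with hβdef
  have hsub : Set.Icc a t ⊆ Set.Icc a b := Set.Icc_subset_Icc le_rfl htb
  have hsub2 : Set.Ioo a t ⊆ Set.Icc a b := fun τ hτ => ⟨hτ.1.le, hτ.2.le.trans htb⟩
  have hxc : ContinuousOn x (Set.Icc a b) := hx.continuousOn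
  have hxd : DifferentiableOn ℝ x (Set.Icc a b) := hx.differentiableOn one_ne_zero
  obtain ⟨M, hM⟩ := (isCompact_Icc).exists_bound_of_continuousOn
      (hx.continuousOn_derivWithin (uniqueDiffOn_Icc hab) le_rfl)
  have hM0 : 0 ≤ M := le_trans (norm_nonneg _) (hM a ⟨le_rfl, hab.le⟩)
  have hlip : ∀ τ ∈ Set.Icc a t, |x t - x τ| ≤ M * (t - τ) := by
    intro τ hτ
    have h1 := (convex_Icc a b).norm_image_sub_le_of_norm_derivWithin_le hxd hM (hsub hτ) htm
    rw [Real.norm_eq_abs, Real.norm_eq_abs] at h1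
    rwa [abs_of_nonneg (by linarith [hτ.2] : (0:ℝ) ≤ t - τ)] at h1
  have hderiv_eq : ∀ τ ∈ Set.Ioo a t, derivWithin x (Set.Icc a b) τ = deriv x τ := by
    intro τ hτ
    exact derivWithin_of_mem_nhds (Icc_mem_nhds hτ.1 (hτ.2.trans_le htb))
  have hMd : ∀ τ ∈ Set.Ioo a t, |deriv x τ| ≤ M := by
    intro τ hτ
    rw [← hderiv_eq τ hτ]
    exact hM τ (hsub2 hτ)
  -- lower bound for the logarithm
  have hlog_lb : ∀ τ, a ≤ τ → τ < t → (t - τ) / t ≤ Real.log (t / τ) := by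
    intro τ h1 h2
    have hτ0 : 0 < τ := ha.trans_le h1
    rw [Real.le_log_iff_exp_le (by positivity)]
    have h3 : 1 - (t - τ) / t ≤ Real.exp (-((t - τ) / t)) := Real.one_sub_le_exp_neg _
    have h4 : 1 - (t - τ) / t = τ / t := by field_simp; ring
    have h5 : Real.exp ((t - τ) / t) * (τ / t) ≤ 1 := by
      calc Real.exp ((t - τ) / t) * (τ / t)
          ≤ Real.exp ((t - τ) / t) * Real.exp (-((t - τ) / t)) := by
            apply mul_le_mul_of_nonneg_left _ (Real.exp_pos _).le
            rw [← h4]; exact h3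
        _ = 1 := by rw [← Real.exp_add]; simp
    rw [le_div_iff₀ hτ0]
    have h6 : Real.exp ((t - τ) / t) * (τ / t) * t ≤ 1 * t :=
      mul_le_mul_of_nonneg_right h5 ht0.le
    calc Real.exp ((t - τ) / t) * τ = Real.exp ((t - τ) / t) * (τ / t) * t := by
          field_simp
      _ ≤ 1 * t := h6
      _ = t := one_mul t
  have hlog_pos : ∀ τ, a ≤ τ → τ < t → 0 < Real.log (t / τ) := by
    intro τ h1 h2
    have hτ0 : 0 < τ := ha.trans_le h1
    exact Real.log_pos ((one_lt_div hτ0).mpr h2)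
  have hpow_bd : ∀ s : ℝ, 0 ≤ s → ∀ τ, a ≤ τ → τ < t →
      Real.log (t / τ) ^ (-s) ≤ t ^ s * (t - τ) ^ (-s) := by
    intro s hs τ h1 h2
    have htτ : (0:ℝ) < t - τ := by linarith
    have h3 : ((t - τ) / t : ℝ) ^ (-s) = t ^ s * (t - τ) ^ (-s) := by
      rw [Real.div_rpow htτ.le ht0.le, Real.rpow_neg ht0.le, Real.rpow_neg htτ.le]
      field_simp
    rw [← h3]
    exact Real.rpow_le_rpow_of_nonpos (by positivity) (hlog_lb τ h1 h2) (by linarith)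
  -- the dominating function is integrable
  have hdom : ∀ c : ℝ, IntervalIntegrable (fun τ => c * (t - τ) ^ (-β)) volume a t := by
    intro c
    have h0 : IntervalIntegrable (fun s : ℝ => s ^ (-β)) volume 0 (t - a) :=
      intervalIntegral.intervalIntegrable_rpow' (by linarith)
    have h1 := ((h0.comp_sub_left t).const_mul c).symm
    simpa using h1
  have hres : volume.restrict (Set.Ioc a t) = volume.restrict (Set.Ioo a t) :=
    Measure.restrict_congr_set Ioo_ae_eq_Ioc.symm
  -- continuity facts on the open interval
  have hcont_log : ∀ c : ℝ, ContinuousOn (fun τ => Real.log (t / τ) ^ c) (Set.Ioo a t) := by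
    intro c τ hτ
    have hτ0 : 0 < τ := ha.trans hτ.1
    have h1 : ContinuousAt (fun τ : ℝ => t / τ) τ := continuousAt_const.div continuousAt_id hτ0.ne'
    have h2 : ContinuousAt (fun τ : ℝ => Real.log (t / τ)) τ :=
      (Real.continuousAt_log (by positivity)).comp h1
    exact (h2.rpow_const (Or.inl (hlog_pos τ hτ.1.le hτ.2).ne')).continuousWithinAt
  have hcont_x : ContinuousOn x (Set.Ioo a t) := hxc.mono hsub2
  have hcont_dx : ContinuousOn (deriv x) (Set.Ioo a t) :=
    (((hx.continuousOn_derivWithin (uniqueDiffOn_Icc hab) le_rfl).mono hsub2).congr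
      fun τ hτ => (hderiv_eq τ hτ).symm)
  -- integrability of the two integrands
  have hJint : IntervalIntegrable (fun τ => Real.log (t / τ) ^ (-β) * deriv x τ) volume a t := by
    rw [intervalIntegrable_iff_integrableOn_Ioc_of_le hat.le, IntegrableOn, hres]
    have hgint : Integrable (fun τ => (t ^ β * M) * (t - τ) ^ (-β))
        (volume.restrict (Set.Ioo a t)) := by
      have h := hdom (t ^ β * M)
      rw [intervalIntegrable_iff_integrableOn_Ioc_of_le hat.le, IntegrableOn, hres] at h
      exact h
    refine hgint.mono' (((hcont_log (-β)).mul hcont_dx).aestronglyMeasurable measurableSet_Ioo) ?_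
    filter_upwards [ae_restrict_mem measurableSet_Ioo] with τ hτ
    have htτ : (0:ℝ) < t - τ := sub_pos.mpr hτ.2
    have h1 : 0 ≤ Real.log (t / τ) ^ (-β) :=
      Real.rpow_nonneg (hlog_pos τ hτ.1.le hτ.2).le _
    rw [Real.norm_eq_abs, abs_mul, abs_of_nonneg h1]
    calc Real.log (t / τ) ^ (-β) * |deriv x τ|
        ≤ (t ^ β * (t - τ) ^ (-β)) * M :=
          mul_le_mul (hpow_bd β hβ0.le τ hτ.1.le hτ.2) (hMd τ hτ) (abs_nonneg _) (by positivity)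
      _ = (t ^ β * M) * (t - τ) ^ (-β) := by ring
  have hIint : IntervalIntegrable
      (fun τ => (x t - x τ) / τ * Real.log (t / τ) ^ (-β - 1)) volume a t := by
    rw [intervalIntegrable_iff_integrableOn_Ioc_of_le hat.le, IntegrableOn, hres]
    have hgint : Integrable (fun τ => (M * t ^ (β + 1) / a) * (t - τ) ^ (-β))
        (volume.restrict (Set.Ioo a t)) := by
      have h := hdom (M * t ^ (β + 1) / a)
      rw [intervalIntegrable_iff_integrableOn_Ioc_of_le hat.le, IntegrableOn, hres] at h
      exact h
    refine hgint.mono' ((((continuousOn_const.sub hcont_x).div continuousOn_id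
      (fun τ hτ => (ha.trans hτ.1).ne')).mul (hcont_log (-β - 1))).aestronglyMeasurable
      measurableSet_Ioo) ?_
    filter_upwards [ae_restrict_mem measurableSet_Ioo] with τ hτ
    have hτ0 : 0 < τ := ha.trans hτ.1
    have htτ : (0:ℝ) < t - τ := sub_pos.mpr hτ.2
    have h1 : 0 ≤ Real.log (t / τ) ^ (-β - 1) :=
      Real.rpow_nonneg (hlog_pos τ hτ.1.le hτ.2).le _
    rw [Real.norm_eq_abs, abs_mul, abs_of_nonneg h1, abs_div, abs_of_pos hτ0]
    have h2 : |x t - x τ| / τ ≤ M * (t - τ) / a :=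
      div_le_div₀ (by positivity) (hlip τ ⟨hτ.1.le, hτ.2.le⟩) ha hτ.1.le
    have h3 : Real.log (t / τ) ^ (-β - 1) ≤ t ^ (β + 1) * (t - τ) ^ (-β - 1) := by
      have h := hpow_bd (β + 1) (by linarith) τ hτ.1.le hτ.2
      rwa [show -(β + 1) = -β - 1 by ring] at h
    have hsp : (t - τ) ^ (-β) = (t - τ) * (t - τ) ^ (-β - 1) := by
      conv_lhs => rw [show -β = 1 + (-β - 1) by ring, Real.rpow_add htτ, Real.rpow_one]
    calc |x t - x τ| / τ * Real.log (t / τ) ^ (-β - 1)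
        ≤ (M * (t - τ) / a) * (t ^ (β + 1) * (t - τ) ^ (-β - 1)) :=
          mul_le_mul h2 h3 h1 (by positivity)
      _ = (M * t ^ (β + 1) / a) * ((t - τ) * (t - τ) ^ (-β - 1)) := by ring
      _ = (M * t ^ (β + 1) / a) * (t - τ) ^ (-β) := by rw [← hsp]
  -- the antiderivative
  set F : ℝ → ℝ := fun τ => (x t - x τ) * Real.log (t / τ) ^ (-β) with hFdef
  have hFt : F t = 0 := by simp [hFdef]
  have hFc : ContinuousOn F (Set.Icc a t) := by
    intro τ hτ
    rcases eq_or_lt_of_le hτ.2 with heq | hlt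
    · subst heq
      have hb : ∀ᶠ σ in 𝓝[Set.Icc a τ] τ, ‖F σ‖ ≤ (M * τ ^ β) * (τ - σ) ^ (1 - β) := by
        filter_upwards [eventually_mem_nhdsWithin] with σ hσ
        rcases eq_or_lt_of_le hσ.2 with heq2 | hlt2
        · rw [heq2, hFt, norm_zero, sub_self, Real.zero_rpow (by linarith : (1:ℝ) - β ≠ 0)]
          simp
        · have htσ : (0:ℝ) < τ - σ := sub_pos.mpr hlt2
          have h1 : 0 ≤ Real.log (τ / σ) ^ (-β) :=
            Real.rpow_nonneg (hlog_pos σ hσ.1 hlt2).le _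
          simp only [hFdef]
          rw [Real.norm_eq_abs, abs_mul, abs_of_nonneg h1]
          calc |x τ - x σ| * Real.log (τ / σ) ^ (-β)
              ≤ (M * (τ - σ)) * (τ ^ β * (τ - σ) ^ (-β)) :=
                mul_le_mul (hlip σ ⟨hσ.1, hlt2.le⟩) (hpow_bd β hβ0.le σ hσ.1 hlt2) h1
                  (by positivity)
            _ = (M * τ ^ β) * ((τ - σ) * (τ - σ) ^ (-β)) := by ring
            _ = (M * τ ^ β) * (τ - σ) ^ (1 - β) := by
                have hsp : (τ - σ) ^ ((1:ℝ) - β) = (τ - σ) * (τ - σ) ^ (-β) := by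
                  conv_lhs => rw [show (1:ℝ) - β = 1 + (-β) by ring, Real.rpow_add htσ,
                    Real.rpow_one]
                rw [hsp]
      have hg0 : Tendsto (fun σ => (M * τ ^ β) * (τ - σ) ^ (1 - β))
          (𝓝[Set.Icc a τ] τ) (𝓝 0) := by
        have h1 : ContinuousAt (fun σ : ℝ => (M * τ ^ β) * (τ - σ) ^ (1 - β)) τ := by
          exact continuousAt_const.mul
            (((continuousAt_const.sub continuousAt_id)).rpow_const (Or.inr (by linarith)))
        have h2 := h1.continuousWithinAt (s := Set.Icc a τ)
        have h3 : Tendsto (fun σ : ℝ => (M * τ ^ β) * (τ - σ) ^ (1 - β)) (𝓝[Set.Icc a τ] τ)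
            (𝓝 ((M * τ ^ β) * (τ - τ) ^ (1 - β))) := h2
        simpa [Real.zero_rpow (show (1:ℝ) - β ≠ 0 by linarith)] using h3
      have := squeeze_zero_norm' hb hg0
      simpa [ContinuousWithinAt, hFt] using this
    · have hτ0 : 0 < τ := ha.trans_le hτ.1
      have h1 : ContinuousAt (fun τ : ℝ => t / τ) τ :=
        continuousAt_const.div continuousAt_id hτ0.ne'
      have h2 : ContinuousAt (fun τ : ℝ => Real.log (t / τ) ^ (-β)) τ :=
        ((Real.continuousAt_log (by positivity)).comp h1).rpow_const
          (Or.inl (hlog_pos τ hτ.1 hlt).ne')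
      exact (continuousWithinAt_const.sub ((hxc.mono hsub) τ hτ)).mul h2.continuousWithinAt
  have hFd : ∀ τ ∈ Set.Ioo a t, HasDerivAt F
      (-(Real.log (t / τ) ^ (-β) * deriv x τ) +
        β * ((x t - x τ) / τ * Real.log (t / τ) ^ (-β - 1))) τ := by
    intro τ hτ
    have hτ0 : 0 < τ := ha.trans hτ.1
    have hlogpos := hlog_pos τ hτ.1.le hτ.2
    have hxda : HasDerivAt x (deriv x τ) τ :=
      ((hxd τ (hsub2 hτ)).differentiableAt
        (Icc_mem_nhds hτ.1 (hτ.2.trans_le htb))).hasDerivAt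
    have hdiv : HasDerivAt (fun τ : ℝ => t / τ) (-(t / τ ^ 2)) τ := by
      have h := (hasDerivAt_inv hτ0.ne').const_mul t
      simp only [div_eq_mul_inv]
      exact h.congr_deriv (by ring)
    have hlog : HasDerivAt (fun τ : ℝ => Real.log (t / τ)) (-(t / τ ^ 2) / (t / τ)) τ :=
      hdiv.log (by positivity)
    have hpow : HasDerivAt (fun τ : ℝ => Real.log (t / τ) ^ (-β))
        (-β * Real.log (t / τ) ^ (-β - 1) * (-(t / τ ^ 2) / (t / τ))) τ :=
      (Real.hasDerivAt_rpow_const (p := -β) (Or.inl hlogpos.ne')).comp τ (h := fun τ : ℝ => Real.log (t / τ)) hlog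
    have hmul := ((hasDerivAt_const τ (x t)).sub hxda).mul hpow
    rw [hFdef]
    refine hmul.congr_deriv ?_
    simp only [Pi.sub_apply]
    have hτne : (τ:ℝ) ≠ 0 := hτ0.ne'
    have htne : (t:ℝ) ≠ 0 := ht0.ne'
    field_simp
    ring
  have hgint : IntervalIntegrable (fun τ =>
      -(Real.log (t / τ) ^ (-β) * deriv x τ) +
        β * ((x t - x τ) / τ * Real.log (t / τ) ^ (-β - 1))) volume a t :=
    hJint.neg.add (hIint.const_mul β)
  have hFTC := intervalIntegral.integral_eq_sub_of_hasDeriv_right_of_le hat.le hFc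
      (fun τ hτ => (hFd τ hτ).hasDerivWithinAt) hgint
  have hJneg : IntervalIntegrable (fun τ => -(Real.log (t / τ) ^ (-β) * deriv x τ)) volume a t :=
    hJint.neg
  rw [intervalIntegral.integral_add hJneg (hIint.const_mul β),
      intervalIntegral.integral_neg, intervalIntegral.integral_const_mul, hFt] at hFTC
  simp only [hFdef] at hFTC
  simp only [hadamardMarchaud, ← hβdef]
  linear_combination (1 / Real.Gamma (1 - β)) * hFTC
end

section
/- Let 0 < a < b be reals, let α : [a,b] → (0,1) be continuously differentiable, and let x : [a,b] → ℝ be continuously differentiable. Then for every t ∈ [a,b) the right Hadamard–Marchaud fractional derivative of variable order admits the integration-by-parts representation ${}_t𝔻_b^{α(t)} x(t) = \frac{x(b)}{Γ(1-α(t))}(\ln\frac{b}{t})^{-α(t)} - \frac{1}{Γ(1-α(t))} \int_t^b (\ln\frac{τ}{t})^{-α(t)} x'(τ)\, dτ$. -/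
open Set MeasureTheory intervalIntegral

/-- The right Hadamard–Marchaud fractional derivative of variable order `α t`. -/
noncomputable def hadamardMarchaudRight (b : ℝ) (α : ℝ → ℝ) (x : ℝ → ℝ) (t : ℝ) : ℝ :=
  (x t / Real.Gamma (1 - α t)) * (Real.log (b / t)) ^ (-(α t)) +
  (α t / Real.Gamma (1 - α t)) *
    ∫ τ in t..b, ((x t - x τ) / τ) * (Real.log (τ / t)) ^ (-(α t) - 1)

theorem hadamard_marchaud_right_parts_repr
    (a b : ℝ) (ha : 0 < a) (hab : a < b)
    (α : ℝ → ℝ) (hα : ContDiffOn ℝ 1 α (Set.Icc a b))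
    (hα01 : ∀ t ∈ Set.Icc a b, α t ∈ Set.Ioo (0 : ℝ) 1)
    (x : ℝ → ℝ) (hx : ContDiffOn ℝ 1 x (Set.Icc a b)) :
    ∀ t ∈ Set.Ico a b,
      hadamardMarchaudRight b α x t =
        (x b / Real.Gamma (1 - α t)) * (Real.log (b / t)) ^ (-(α t)) -
        (1 / Real.Gamma (1 - α t)) *
          ∫ τ in t..b, (Real.log (τ / t)) ^ (-(α t)) * deriv x τ := by
  intro t ht
  obtain ⟨hta, htb⟩ := ht
  have ht0 : 0 < t := lt_of_lt_of_le ha hta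
  have hb0 : 0 < b := lt_trans ht0 htb
  have htIcc : t ∈ Set.Icc a b := ⟨hta, htb.le⟩
  obtain ⟨hA0, hA1⟩ := hα01 t htIcc
  rw [hadamardMarchaudRight]
  set A := α t with hA
  -- bound on the derivative of x
  obtain ⟨M, hM⟩ := isCompact_Icc.exists_bound_of_continuousOn
    (hx.continuousOn_derivWithin (uniqueDiffOn_Icc hab) le_rfl)
  have hM0 : 0 ≤ M := le_trans (norm_nonneg _) (hM a (Set.left_mem_Icc.2 hab.le))
  -- Lipschitz bound
  have hlip : ∀ τ ∈ Set.Icc a b, |x τ - x t| ≤ M * |τ - t| := by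
    intro τ hτ
    have := (convex_Icc a b).norm_image_sub_le_of_norm_derivWithin_le
      (hx.differentiableOn one_ne_zero) hM htIcc hτ
    simpa using this
  -- deriv facts on the interior
  have hderiv_fact : ∀ τ ∈ Set.Ioo a b, HasDerivAt x (deriv x τ) τ ∧ |deriv x τ| ≤ M := by
    intro τ hτ
    have hmem : Set.Icc a b ∈ nhds τ := Icc_mem_nhds hτ.1 hτ.2
    have hdiff : DifferentiableAt ℝ x τ := (hx.contDiffAt hmem).differentiableAt one_ne_zero
    have heq : derivWithin x (Set.Icc a b) τ = deriv x τ := derivWithin_of_mem_nhds hmem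
    exact ⟨hdiff.hasDerivAt, heq ▸ hM τ (Set.mem_Icc_of_Ioo hτ)⟩
  have hlog_pos : ∀ τ : ℝ, t < τ → 0 < Real.log (τ / t) := fun τ h =>
    Real.log_pos ((one_lt_div ht0).2 h)
  -- lower bound for the logarithm
  have hlog_lb : ∀ τ ∈ Set.Ioc t b, (τ - t) / b ≤ Real.log (τ / t) := by
    intro τ hτ
    have hτ0 : 0 < τ := lt_trans ht0 hτ.1
    have h1 : Real.log (t / τ) ≤ t / τ - 1 :=
      Real.log_le_sub_one_of_pos (div_pos ht0 hτ0)
    have h2 : Real.log (τ / t) = -Real.log (t / τ) := by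
      rw [← Real.log_inv, inv_div]
    have h3 : 1 - t / τ = (τ - t) / τ := by field_simp
    have h4 : (τ - t) / b ≤ (τ - t) / τ := by
      gcongr <;> linarith [hτ.1, hτ.2]
    linarith
  -- kernel bound
  have hker : ∀ τ ∈ Set.Ioc t b, ∀ c : ℝ, c ≤ 0 →
      Real.log (τ / t) ^ c ≤ b ^ (-c) * (τ - t) ^ c := by
    intro τ hτ c hc
    have hts : 0 < τ - t := sub_pos.2 hτ.1
    have hpos : 0 < (τ - t) / b := div_pos hts hb0
    have h1 : Real.log (τ / t) ^ c ≤ ((τ - t) / b) ^ c :=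
      Real.rpow_le_rpow_of_nonpos hpos (hlog_lb τ hτ) hc
    have h2 : ((τ - t) / b) ^ c = (τ - t) ^ c / b ^ c :=
      Real.div_rpow hts.le hb0.le c
    have h3 : (τ - t) ^ c / b ^ c = b ^ (-c) * (τ - t) ^ c := by
      rw [Real.rpow_neg hb0.le]
      field_simp
    rw [h2, h3] at h1
    exact h1
  -- integrable majorant
  have hmaj : ∀ C : ℝ, IntegrableOn (fun τ => C * (τ - t) ^ (-A)) (Set.Ioo t b) := by
    intro C
    have h1 : IntervalIntegrable (fun s : ℝ => s ^ (-A)) volume 0 (b - t) :=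
      intervalIntegral.intervalIntegrable_rpow' (by linarith)
    have h2 := h1.comp_sub_right t
    rw [zero_add, sub_add_cancel] at h2
    exact (((integrableOn_Ioc_iff_integrableOn_Ioo enorm_ne_top).1
      ((intervalIntegrable_iff_integrableOn_Ioc_of_le htb.le).1 h2)).const_mul C)
  -- continuity of the kernel on (t, b)
  have hcontK : ∀ c : ℝ, ContinuousOn (fun τ => Real.log (τ / t) ^ c) (Set.Ioi t) := by
    intro c τ hτ
    apply ContinuousAt.continuousWithinAt
    have h1 : ContinuousAt (fun σ : ℝ => Real.log (σ / t)) τ :=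
      ContinuousAt.log (continuousAt_id.div_const t)
        (ne_of_gt (div_pos (lt_trans ht0 hτ) ht0))
    exact h1.rpow_const (Or.inl (ne_of_gt (hlog_pos τ hτ)))
  -- continuity of deriv x on the open interval
  have hderivcont : ContinuousOn (deriv x) (Set.Ioo a b) :=
    (hx.mono Set.Ioo_subset_Icc_self).continuousOn_deriv_of_isOpen isOpen_Ioo le_rfl
  have hsub : Set.Ioo t b ⊆ Set.Ioo a b := Set.Ioo_subset_Ioo hta le_rfl
  -- integrability of the first integrand
  have hI1 : IntervalIntegrable (fun τ => Real.log (τ / t) ^ (-A) * deriv x τ) volume t b := by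
    rw [intervalIntegrable_iff_integrableOn_Ioc_of_le htb.le,
      integrableOn_Ioc_iff_integrableOn_Ioo]
    apply Integrable.mono' (hmaj (M * b ^ A))
    · exact (((hcontK (-A)).mono (fun τ hτ => hτ.1)).mul
        (hderivcont.mono hsub)).aestronglyMeasurable measurableSet_Ioo
    · filter_upwards [ae_restrict_mem measurableSet_Ioo] with τ hτ
      have hts : 0 < τ - t := sub_pos.2 hτ.1
      have hL0 : 0 ≤ Real.log (τ / t) := (hlog_pos τ hτ.1).le
      have h1 : Real.log (τ / t) ^ (-A) ≤ b ^ A * (τ - t) ^ (-A) := by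
        simpa using hker τ ⟨hτ.1, hτ.2.le⟩ (-A) (by linarith)
      have h2 : |deriv x τ| ≤ M := (hderiv_fact τ (hsub hτ)).2
      have h3 : 0 ≤ Real.log (τ / t) ^ (-A) := Real.rpow_nonneg hL0 _
      calc ‖Real.log (τ / t) ^ (-A) * deriv x τ‖
          = Real.log (τ / t) ^ (-A) * |deriv x τ| := by
            rw [Real.norm_eq_abs, abs_mul, abs_of_nonneg h3]
        _ ≤ (b ^ A * (τ - t) ^ (-A)) * M := by
            apply mul_le_mul h1 h2 (abs_nonneg _)
            positivity
        _ = M * b ^ A * (τ - t) ^ (-A) := by ring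
  -- integrability of the second integrand
  have hI2 : IntervalIntegrable (fun τ => ((x t - x τ) / τ) * Real.log (τ / t) ^ (-A - 1))
      volume t b := by
    rw [intervalIntegrable_iff_integrableOn_Ioc_of_le htb.le,
      integrableOn_Ioc_iff_integrableOn_Ioo]
    apply Integrable.mono' (hmaj (M / t * b ^ (A + 1)))
    · apply ContinuousOn.aestronglyMeasurable _ measurableSet_Ioo
      have hsub2 : Set.Ioo t b ⊆ Set.Icc a b := fun τ hτ =>
        ⟨le_trans hta hτ.1.le, hτ.2.le⟩
      exact ((continuousOn_const.sub (hx.continuousOn.mono hsub2)).div continuousOn_id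
        (fun τ hτ => ne_of_gt (lt_trans ht0 hτ.1))).mul
        ((hcontK (-A - 1)).mono (fun τ hτ => hτ.1))
    · filter_upwards [ae_restrict_mem measurableSet_Ioo] with τ hτ
      have hts : 0 < τ - t := sub_pos.2 hτ.1
      have hτ0 : 0 < τ := lt_trans ht0 hτ.1
      have hL0 : 0 ≤ Real.log (τ / t) := (hlog_pos τ hτ.1).le
      have h1 : Real.log (τ / t) ^ (-A - 1) ≤ b ^ (A + 1) * (τ - t) ^ (-A - 1) := by
        have := hker τ ⟨hτ.1, hτ.2.le⟩ (-A - 1) (by linarith)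
        simpa [neg_sub, neg_neg, show -(-A - 1) = A + 1 by ring] using this
      have h3 : 0 ≤ Real.log (τ / t) ^ (-A - 1) := Real.rpow_nonneg hL0 _
      have hxb : |x t - x τ| ≤ M * (τ - t) := by
        have := hlip τ ⟨le_trans hta hτ.1.le, hτ.2.le⟩
        rw [abs_sub_comm]
        rwa [abs_of_pos hts] at this
      have hdivb : |(x t - x τ) / τ| ≤ M * (τ - t) / t := by
        rw [abs_div, abs_of_pos hτ0]
        exact div_le_div₀ (by positivity) hxb ht0 hτ.1.le
      calc ‖(x t - x τ) / τ * Real.log (τ / t) ^ (-A - 1)‖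
          = |(x t - x τ) / τ| * Real.log (τ / t) ^ (-A - 1) := by
            rw [Real.norm_eq_abs, abs_mul, abs_of_nonneg h3]
        _ ≤ (M * (τ - t) / t) * (b ^ (A + 1) * (τ - t) ^ (-A - 1)) := by
            apply mul_le_mul hdivb h1 h3
            positivity
        _ = (M / t * b ^ (A + 1)) * ((τ - t) * (τ - t) ^ (-A - 1)) := by ring
        _ = (M / t * b ^ (A + 1)) * (τ - t) ^ (-A) := by
            have hsum := Real.rpow_add hts 1 (-A - 1)
            rw [Real.rpow_one, show (1 : ℝ) + (-A - 1) = -A by ring] at hsum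
            rw [← hsum]
  -- the antiderivative
  set F := fun τ : ℝ => (x τ - x t) * Real.log (τ / t) ^ (-A) with hF
  set f' := fun τ : ℝ => Real.log (τ / t) ^ (-A) * deriv x τ +
      A * (((x t - x τ) / τ) * Real.log (τ / t) ^ (-A - 1)) with hf'
  have hFderiv : ∀ τ ∈ Set.Ioo t b, HasDerivAt F (f' τ) τ := by
    intro τ hτ
    have hτ0 : 0 < τ := lt_trans ht0 hτ.1
    have hxd : HasDerivAt x (deriv x τ) τ := (hderiv_fact τ (hsub hτ)).1
    have hlogD : HasDerivAt (fun σ : ℝ => Real.log (σ / t)) (1 / τ) τ := by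
      have h0 : HasDerivAt (fun σ : ℝ => σ / t) (1 / t) τ := by
        simpa using (hasDerivAt_id τ).div_const t
      have := h0.log (ne_of_gt (div_pos hτ0 ht0))
      convert this using 1
      field_simp
    have hgD : HasDerivAt (fun σ : ℝ => Real.log (σ / t) ^ (-A))
        ((-A) * Real.log (τ / t) ^ (-A - 1) * (1 / τ)) τ := by
      have hr := Real.hasDerivAt_rpow_const (x := Real.log (τ / t)) (p := -A)
        (Or.inl (ne_of_gt (hlog_pos τ hτ.1)))
      exact hr.comp τ hlogD
    have hprod := (hxd.sub_const (x t)).mul hgD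
    refine hprod.congr_deriv ?_
    simp only [hf']
    field_simp
    ring
  have hFcont : ContinuousOn F (Set.Icc t b) := by
    intro τ hτ
    rcases hτ.1.eq_or_lt with heq | hlt
    · -- continuity at the left endpoint via squeeze
      rw [← heq]
      have hFt : F t = 0 := by simp [hF]
      rw [ContinuousWithinAt, hFt]
      apply squeeze_zero_norm' (a := fun σ => (M * b ^ A) * (σ - t) ^ (1 - A))
      · filter_upwards [self_mem_nhdsWithin] with σ hσ
        rcases hσ.1.eq_or_lt with heq2 | hlt2
        · rw [← heq2]
          simp [hF, sub_self, Real.zero_rpow (ne_of_gt (by linarith : (0:ℝ) < 1 - A))]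
        · have hts : 0 < σ - t := sub_pos.2 hlt2
          have hL0 : 0 ≤ Real.log (σ / t) := (hlog_pos σ hlt2).le
          have h3 : 0 ≤ Real.log (σ / t) ^ (-A) := Real.rpow_nonneg hL0 _
          have h1 : Real.log (σ / t) ^ (-A) ≤ b ^ A * (σ - t) ^ (-A) := by
            simpa using hker σ ⟨hlt2, hσ.2⟩ (-A) (by linarith)
          have hxb : |x σ - x t| ≤ M * (σ - t) := by
            have := hlip σ ⟨le_trans hta hlt2.le, hσ.2⟩
            rwa [abs_of_pos hts] at this
          calc ‖F σ‖ = |x σ - x t| * Real.log (σ / t) ^ (-A) := by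
                rw [hF]; rw [Real.norm_eq_abs, abs_mul, abs_of_nonneg h3]
            _ ≤ (M * (σ - t)) * (b ^ A * (σ - t) ^ (-A)) := by
                apply mul_le_mul hxb h1 h3
                positivity
            _ = (M * b ^ A) * ((σ - t) * (σ - t) ^ (-A)) := by ring
            _ = (M * b ^ A) * (σ - t) ^ (1 - A) := by
                have hsum := Real.rpow_add hts 1 (-A)
                rw [Real.rpow_one, show (1 : ℝ) + -A = 1 - A by ring] at hsum
                rw [hsum]
      · have hc : ContinuousWithinAt (fun σ => (M * b ^ A) * (σ - t) ^ (1 - A))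
            (Set.Icc t b) t := by
          apply ContinuousAt.continuousWithinAt
          apply ContinuousAt.mul continuousAt_const
          exact ContinuousAt.rpow_const
            ((continuous_id.sub continuous_const).continuousAt)
            (Or.inr (by linarith))
        have hc' : Filter.Tendsto (fun σ => (M * b ^ A) * (σ - t) ^ (1 - A))
            (nhdsWithin t (Set.Icc t b))
            (nhds ((M * b ^ A) * ((t : ℝ) - t) ^ (1 - A))) := hc
        have hval : (M * b ^ A) * ((t : ℝ) - t) ^ (1 - A) = 0 := by
          rw [sub_self, Real.zero_rpow (ne_of_gt (by linarith : (0:ℝ) < 1 - A))]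
          ring
        rwa [hval] at hc'
    · -- continuity at interior / right points
      have hcx : ContinuousWithinAt x (Set.Icc t b) τ :=
        (hx.continuousOn.mono (Set.Icc_subset_Icc hta le_rfl)) τ hτ
      have hcg : ContinuousAt (fun σ : ℝ => Real.log (σ / t) ^ (-A)) τ := by
        have h1 : ContinuousAt (fun σ : ℝ => Real.log (σ / t)) τ :=
          ContinuousAt.log (continuousAt_id.div_const t)
            (ne_of_gt (div_pos (lt_trans ht0 hlt) ht0))
        exact h1.rpow_const (Or.inl (ne_of_gt (hlog_pos τ hlt)))
      exact ((hcx.sub continuousWithinAt_const).mul hcg.continuousWithinAt)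
  have hf'int : IntervalIntegrable f' volume t b := hI1.add (hI2.const_mul A)
  have key := intervalIntegral.integral_eq_sub_of_hasDeriv_right_of_le htb.le hFcont
    (fun τ hτ => (hFderiv τ hτ).hasDerivWithinAt) hf'int
  have hFb : F b = (x b - x t) * Real.log (b / t) ^ (-A) := rfl
  have hFt2 : F t = 0 := by simp [hF]
  rw [hFb, hFt2, sub_zero] at key
  have hsplit : (∫ τ in t..b, f' τ) =
      (∫ τ in t..b, Real.log (τ / t) ^ (-A) * deriv x τ) +
      A * ∫ τ in t..b, ((x t - x τ) / τ) * Real.log (τ / t) ^ (-A - 1) := by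
    rw [hf']
    rw [intervalIntegral.integral_add hI1 (hI2.const_mul A),
      intervalIntegral.integral_const_mul]
  rw [hsplit] at key
  -- conclude by algebra
  have hΓ : Real.Gamma (1 - A) ≠ 0 := ne_of_gt (Real.Gamma_pos_of_pos (by linarith))
  have hAI : A * (∫ τ in t..b, ((x t - x τ) / τ) * Real.log (τ / t) ^ (-A - 1)) =
      (x b - x t) * Real.log (b / t) ^ (-A) -
      ∫ τ in t..b, Real.log (τ / t) ^ (-A) * deriv x τ := by linarith
  have expand : (A / Real.Gamma (1 - A)) *
      (∫ τ in t..b, ((x t - x τ) / τ) * Real.log (τ / t) ^ (-A - 1)) =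
      (1 / Real.Gamma (1 - A)) *
      (A * ∫ τ in t..b, ((x t - x τ) / τ) * Real.log (τ / t) ^ (-A - 1)) := by ring
  rw [expand, hAI]
  ring
end

section
/- Let 0 < a < t be reals and let k ≥ 0 be an integer. Then $\int_a^t \frac{(\ln\frac{τ}{a})^{k+1}}{(\ln\frac{t}{a})^{k}}\, dτ \le \frac{(2t-a)(\ln\frac{t}{a})^{2}}{k+2}$. -/
theorem integral_log_pow_le
    (a t : ℝ) (ha : 0 < a) (hat : a < t) (k : ℕ) :
    (∫ τ in a..t, (Real.log (τ / a)) ^ (k + 1) / (Real.log (t / a)) ^ k) ≤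
      (2 * t - a) * (Real.log (t / a)) ^ 2 / ((k : ℝ) + 2) := by
  have ht0 : 0 < t := ha.trans hat
  set L := Real.log (t / a) with hLdef
  have hL0 : 0 < L := Real.log_pos (by rw [lt_div_iff₀ ha]; linarith)
  have hpos : ∀ x ∈ Set.uIcc a t, 0 < x := by
    intro x hx
    rw [Set.uIcc_of_le hat.le] at hx
    exact lt_of_lt_of_le ha hx.1
  -- continuity
  have hclog : ContinuousOn (fun τ : ℝ => Real.log (τ / a)) (Set.uIcc a t) := by
    apply ContinuousOn.log (continuousOn_id.div_const a)
    intro x hx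
    have := hpos x hx
    positivity
  have hcont1 : ContinuousOn (fun τ : ℝ => (Real.log (τ / a)) ^ (k + 1)) (Set.uIcc a t) :=
    hclog.pow _
  have hcont2 : ContinuousOn (fun τ : ℝ => t * ((Real.log (τ / a)) ^ (k + 1) / τ))
      (Set.uIcc a t) := by
    apply ContinuousOn.mul continuousOn_const
    exact hcont1.div continuousOn_id (fun x hx => (hpos x hx).ne')
  have hint1 : IntervalIntegrable (fun τ : ℝ => (Real.log (τ / a)) ^ (k + 1))
      MeasureTheory.volume a t := hcont1.intervalIntegrable
  have hint2 : IntervalIntegrable (fun τ : ℝ => t * ((Real.log (τ / a)) ^ (k + 1) / τ))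
      MeasureTheory.volume a t := hcont2.intervalIntegrable
  have hint3 : IntervalIntegrable (fun τ : ℝ => (Real.log (τ / a)) ^ (k + 1) / τ)
      MeasureTheory.volume a t :=
    (hcont1.div continuousOn_id (fun x hx => (hpos x hx).ne')).intervalIntegrable
  -- FTC: ∫ log(τ/a)^(k+1)/τ = L^(k+2)/(k+2)
  have key : (∫ τ in a..t, (Real.log (τ / a)) ^ (k + 1) / τ) = L ^ (k + 2) / ((k : ℝ) + 2) := by
    have hderiv : ∀ x ∈ Set.uIcc a t,
        HasDerivAt (fun x : ℝ => (Real.log (x / a)) ^ (k + 2) / ((k : ℝ) + 2))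
          ((Real.log (x / a)) ^ (k + 1) / x) x := by
      intro x hx
      have hx0 : 0 < x := hpos x hx
      have h1 : HasDerivAt (fun x : ℝ => Real.log (x / a)) x⁻¹ x := by
        have h2 : HasDerivAt (fun x : ℝ => Real.log x - Real.log a) x⁻¹ x :=
          (Real.hasDerivAt_log hx0.ne').sub_const _
        apply h2.congr_of_eventuallyEq
        filter_upwards [eventually_gt_nhds hx0] with y hy
        rw [Real.log_div hy.ne' ha.ne']
      have h3 : HasDerivAt (fun x : ℝ => (Real.log (x / a)) ^ (k + 2) / ((k : ℝ) + 2))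
          (((k + 2 : ℕ) : ℝ) * Real.log (x / a) ^ (k + 2 - 1) * x⁻¹ / ((k : ℝ) + 2)) x :=
        (h1.pow (k + 2)).div_const ((k : ℝ) + 2)
      convert h3 using 1
      have : ((k : ℝ) + 2) ≠ 0 := by positivity
      push_cast
      field_simp
    have := intervalIntegral.integral_eq_sub_of_hasDerivAt hderiv hint3
    rw [this]
    rw [div_self ha.ne', Real.log_one]
    simp [hLdef]
  -- monotone comparison
  have hmono : (∫ τ in a..t, (Real.log (τ / a)) ^ (k + 1)) ≤
      ∫ τ in a..t, t * ((Real.log (τ / a)) ^ (k + 1) / τ) := by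
    apply intervalIntegral.integral_mono_on hat.le hint1 hint2
    intro x hx
    have hx0 : 0 < x := lt_of_lt_of_le ha hx.1
    have hxa : (1:ℝ) ≤ x / a := (one_le_div ha).2 hx.1
    have hlog0 : 0 ≤ Real.log (x / a) := Real.log_nonneg hxa
    have hp : 0 ≤ (Real.log (x / a)) ^ (k + 1) := pow_nonneg hlog0 _
    rw [mul_div_assoc' , le_div_iff₀ hx0]
    nlinarith [hx.2]
  have hcalc : (∫ τ in a..t, t * ((Real.log (τ / a)) ^ (k + 1) / τ)) =
      t * (L ^ (k + 2) / ((k : ℝ) + 2)) := by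
    rw [intervalIntegral.integral_const_mul, key]
  -- assemble
  have hLsum : (∫ τ in a..t, (Real.log (τ / a)) ^ (k + 1) / L ^ k) =
      (∫ τ in a..t, (Real.log (τ / a)) ^ (k + 1)) / L ^ k :=
    intervalIntegral.integral_div _ _
  rw [hLsum]
  have hk2 : (0:ℝ) < (k : ℝ) + 2 := by positivity
  have hLk : (0:ℝ) < L ^ k := pow_pos hL0 k
  rw [div_le_iff₀ hLk]
  have h1 : (∫ τ in a..t, (Real.log (τ / a)) ^ (k + 1)) ≤ t * (L ^ (k + 2) / ((k : ℝ) + 2)) := by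
    rw [← hcalc]; exact hmono
  apply h1.trans
  have hLpow : L ^ (k + 2) = L ^ 2 * L ^ k := by ring
  rw [hLpow]
  have h2 : t * (L ^ 2 * L ^ k) ≤ (2 * t - a) * (L ^ 2 * L ^ k) :=
    mul_le_mul_of_nonneg_right (by linarith) (by positivity)
  have e1 : t * (L ^ 2 * L ^ k / ((k:ℝ) + 2)) = t * (L ^ 2 * L ^ k) / ((k:ℝ) + 2) := by ring
  have e2 : (2 * t - a) * L ^ 2 / ((k:ℝ) + 2) * L ^ k
      = (2 * t - a) * (L ^ 2 * L ^ k) / ((k:ℝ) + 2) := by ring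
  rw [e1, e2]
  exact div_le_div_of_nonneg_right h2 hk2.le
end

section
/- Let 0 < a < t be reals and let k ≥ 0 and p ≥ 1 be integers. Then $\int_a^t \frac{(\ln\frac{τ}{a})^{k+p+1}}{(\ln\frac{t}{a})^{k+p}}\, dτ \le \frac{(2t-a)(\ln\frac{t}{a})^{2}}{k+p+2}$. -/
open MeasureTheory intervalIntegral

theorem integral_log_pow_le'
    (a t : ℝ) (ha : 0 < a) (hat : a < t) (k p : ℕ) (hp : 1 ≤ p) :
    (∫ τ in a..t, (Real.log (τ / a)) ^ (k + p + 1) / (Real.log (t / a)) ^ (k + p)) ≤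
      (2 * t - a) * (Real.log (t / a)) ^ 2 / ((k : ℝ) + p + 2) := by
  set L := Real.log (t / a) with hLdef
  have hL : 0 < L := Real.log_pos (by rw [lt_div_iff₀ ha]; linarith)
  set n := k + p with hn
  have ht : 0 < t := ha.trans hat
  -- positivity on the interval
  have hpos : ∀ x ∈ Set.uIcc a t, 0 < x := by
    intro x hx
    rw [Set.uIcc_of_le hat.le] at hx
    linarith [hx.1]
  -- continuity / integrability of f
  have hcont : ∀ m : ℕ, ContinuousOn (fun τ : ℝ => (Real.log (τ / a)) ^ m) (Set.uIcc a t) := by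
    intro m
    apply ContinuousOn.pow
    apply ContinuousOn.log (continuousOn_id.div_const a)
    intro x hx
    have := hpos x hx
    positivity
  have hIntf : IntervalIntegrable
      (fun τ : ℝ => (Real.log (τ / a)) ^ (n + 1) / L ^ n) volume a t :=
    ((hcont (n + 1)).div_const _).intervalIntegrable
  -- the majorant g and its integrability
  set g : ℝ → ℝ := fun τ => t * (Real.log (τ / a)) ^ (n + 1) / (τ * L ^ n) with hg
  have hIntg : IntervalIntegrable g volume a t := by
    apply ContinuousOn.intervalIntegrable
    apply ContinuousOn.div ((hcont (n + 1)).const_smul t)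
    · exact continuousOn_id.mul continuousOn_const
    · intro x hx
      have := hpos x hx
      positivity
  -- antiderivative
  set F : ℝ → ℝ := fun τ => t * (Real.log τ - Real.log a) ^ (n + 2) / (((n : ℝ) + 2) * L ^ n)
    with hF
  have hderiv : ∀ x ∈ Set.uIcc a t, HasDerivAt F (g x) x := by
    intro x hx
    have hx0 : 0 < x := hpos x hx
    have h1 : HasDerivAt (fun τ : ℝ => Real.log τ - Real.log a) x⁻¹ x :=
      (Real.hasDerivAt_log hx0.ne').sub_const _
    have h2 := (h1.pow (n + 2)).const_mul t |>.div_const (((n : ℝ) + 2) * L ^ n)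
    refine h2.congr_deriv ?_
    have hlog : Real.log (x / a) = Real.log x - Real.log a := Real.log_div hx0.ne' ha.ne'
    rw [hg]
    simp only [hlog]
    have hn2 : ((n : ℝ) + 2) ≠ 0 := by positivity
    rw [show n + 2 - 1 = n + 1 by omega]
    push_cast
    field_simp
  have hInteg : ∫ τ in a..t, g τ = F t - F a :=
    integral_eq_sub_of_hasDerivAt hderiv hIntg
  -- pointwise comparison
  have hmono : (∫ τ in a..t, (Real.log (τ / a)) ^ (n + 1) / L ^ n) ≤ ∫ τ in a..t, g τ := by
    apply integral_mono_on hat.le hIntf hIntg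
    intro x hx
    have hx0 : a ≤ x := hx.1
    have hxt : x ≤ t := hx.2
    have hxpos : 0 < x := lt_of_lt_of_le ha hx0
    have hlognn : 0 ≤ Real.log (x / a) := Real.log_nonneg (by rw [le_div_iff₀ ha]; linarith)
    rw [hg]
    rw [div_le_div_iff₀ (by positivity) (by positivity)]
    have h1 : (Real.log (x / a)) ^ (n + 1) * x ≤ (Real.log (x / a)) ^ (n + 1) * t := by
      apply mul_le_mul_of_nonneg_left hxt (by positivity)
    calc (Real.log (x / a)) ^ (n + 1) * (x * L ^ n)
        = ((Real.log (x / a)) ^ (n + 1) * x) * L ^ n := by ring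
      _ ≤ ((Real.log (x / a)) ^ (n + 1) * t) * L ^ n := by
          apply mul_le_mul_of_nonneg_right h1 (by positivity)
      _ = t * (Real.log (x / a)) ^ (n + 1) * L ^ n := by ring
  -- compute F t - F a
  have hFa : F a = 0 := by simp [hF]
  have hFt : F t = t * L ^ 2 / ((n : ℝ) + 2) := by
    show t * (Real.log t - Real.log a) ^ (n + 2) / (((n : ℝ) + 2) * L ^ n) = _
    have : Real.log t - Real.log a = L := (Real.log_div ht.ne' ha.ne').symm
    rw [this]
    have hLn : L ^ n ≠ 0 := by positivity
    have hn2 : ((n : ℝ) + 2) ≠ 0 := by positivity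
    field_simp
    ring
  have hcast : ((n : ℝ) + 2) = (k : ℝ) + p + 2 := by
    rw [hn]; push_cast; ring
  calc (∫ τ in a..t, (Real.log (τ / a)) ^ (n + 1) / L ^ n)
      ≤ ∫ τ in a..t, g τ := hmono
    _ = t * L ^ 2 / ((n : ℝ) + 2) := by rw [hInteg, hFa, hFt]; ring
    _ ≤ (2 * t - a) * L ^ 2 / ((k : ℝ) + p + 2) := by
        rw [← hcast]
        apply div_le_div_of_nonneg_right ?_ (by positivity) |>.trans_eq rfl
        nlinarith [sq_nonneg L, hL]
end

section
/- Let α ∈ (0,1) and let N ≥ 1 be a real number. Then $\int_N^{\infty}\int_N^{\infty} \frac{dp\, dk}{k^{1-α}\, p\, (k+p+1)(k+p+2)} < \frac{1}{(1-α)N^{2-α}}$. -/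
open MeasureTheory Set

theorem double_integral_Ioi_lt
    (α : ℝ) (hα : α ∈ Set.Ioo (0 : ℝ) 1) (N : ℝ) (hN : 1 ≤ N) :
    (∫ k in Set.Ioi N, ∫ p in Set.Ioi N,
        1 / (k ^ (1 - α) * p * (k + p + 1) * (k + p + 2))) <
      1 / ((1 - α) * N ^ (2 - α)) := by
  obtain ⟨hα0, hα1⟩ := hα
  have hN0 : (0 : ℝ) < N := lt_of_lt_of_le one_pos hN
  have hRHSpos : 0 < 1 / ((1 - α) * N ^ (2 - α)) := by
    apply div_pos one_pos
    exact mul_pos (by linarith) (Real.rpow_pos_of_pos hN0 _)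
  -- key: LHS ≤ (1/4) * RHS
  have hint2 : IntegrableOn (fun p : ℝ => p ^ (-2 : ℝ)) (Ioi N) :=
    integrableOn_Ioi_rpow_of_lt (by norm_num) hN0
  have hintk : IntegrableOn (fun k : ℝ => k ^ (α - 2)) (Ioi N) :=
    integrableOn_Ioi_rpow_of_lt (by linarith) hN0
  have hI2 : (∫ p in Ioi N, p ^ (-2 : ℝ)) = N ^ (-1 : ℝ) := by
    rw [integral_Ioi_rpow_of_lt (by norm_num) hN0]
    norm_num
  have hIk : (∫ k in Ioi N, k ^ (α - 2)) = N ^ (α - 1) / (1 - α) := by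
    rw [integral_Ioi_rpow_of_lt (by linarith) hN0]
    have h1 : α - 1 ≠ 0 := by linarith
    have h2 : (1:ℝ) - α ≠ 0 := by linarith
    rw [show α - 2 + 1 = α - 1 by ring]
    field_simp
    ring
  -- inner bound
  have hinner : ∀ k ∈ Ioi N,
      (∫ p in Set.Ioi N, 1 / (k ^ (1 - α) * p * (k + p + 1) * (k + p + 2)))
        ≤ (1 / 4) * k ^ (α - 2) * N ^ (-1 : ℝ) := by
    intro k hk
    have hk0 : (0 : ℝ) < k := lt_trans hN0 hk
    have hbound : ∀ p ∈ Ioi N,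
        1 / (k ^ (1 - α) * p * (k + p + 1) * (k + p + 2))
          ≤ (1 / 4) * k ^ (α - 2) * p ^ (-2 : ℝ) := by
      intro p hp
      have hp0 : (0 : ℝ) < p := lt_trans hN0 hp
      have hk1a : (0 : ℝ) < k ^ (1 - α) := Real.rpow_pos_of_pos hk0 _
      have h4 : 4 * (k * p) ≤ (k + p + 1) * (k + p + 2) := by
        nlinarith [sq_nonneg (k - p), sq_nonneg (k + p)]
      have hrw : (1 / 4) * k ^ (α - 2) * p ^ (-2 : ℝ)
          = 1 / (k ^ (1 - α) * k * p * (4 * p)) := by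
        rw [show (α - 2 : ℝ) = -(1 - α) + -1 by ring,
          Real.rpow_add hk0, Real.rpow_neg hk0.le, Real.rpow_neg_one,
          Real.rpow_neg hp0.le, show (2:ℝ) = ((2:ℕ):ℝ) by norm_num,
          Real.rpow_natCast]
        field_simp
      rw [hrw]
      apply one_div_le_one_div_of_le
      · positivity
      · calc k ^ (1 - α) * k * p * (4 * p) = k ^ (1 - α) * (4 * (k * p)) * p := by ring
          _ ≤ k ^ (1 - α) * ((k + p + 1) * (k + p + 2)) * p := by
              apply mul_le_mul_of_nonneg_right _ hp0.le
              exact mul_le_mul_of_nonneg_left h4 hk1a.le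
          _ = k ^ (1 - α) * p * (k + p + 1) * (k + p + 2) := by ring
    have := integral_mono_of_nonneg (μ := volume.restrict (Ioi N))
      (f := fun p => 1 / (k ^ (1 - α) * p * (k + p + 1) * (k + p + 2)))
      (g := fun p => (1 / 4) * k ^ (α - 2) * p ^ (-2 : ℝ))
      ?_ (hint2.const_mul _) ?_
    · calc _ ≤ ∫ p in Ioi N, (1 / 4) * k ^ (α - 2) * p ^ (-2 : ℝ) := this
        _ = (1 / 4) * k ^ (α - 2) * N ^ (-1 : ℝ) := by
            rw [integral_const_mul, hI2]
    · filter_upwards [ae_restrict_mem measurableSet_Ioi] with p hp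
      have hp0 : (0 : ℝ) < p := lt_trans hN0 hp
      positivity
    · filter_upwards [ae_restrict_mem measurableSet_Ioi] with p hp
      exact hbound p hp
  have houter : (∫ k in Set.Ioi N, ∫ p in Set.Ioi N,
        1 / (k ^ (1 - α) * p * (k + p + 1) * (k + p + 2)))
      ≤ (1 / 4) * N ^ (-1 : ℝ) * (N ^ (α - 1) / (1 - α)) := by
    have := integral_mono_of_nonneg (μ := volume.restrict (Ioi N))
      (f := fun k => ∫ p in Set.Ioi N, 1 / (k ^ (1 - α) * p * (k + p + 1) * (k + p + 2)))
      (g := fun k => (1 / 4) * N ^ (-1 : ℝ) * k ^ (α - 2))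
      ?_ (hintk.const_mul _) ?_
    · calc _ ≤ ∫ k in Ioi N, (1 / 4) * N ^ (-1 : ℝ) * k ^ (α - 2) := this
        _ = (1 / 4) * N ^ (-1 : ℝ) * (N ^ (α - 1) / (1 - α)) := by
            rw [integral_const_mul, hIk]
    · filter_upwards [ae_restrict_mem measurableSet_Ioi] with k hk
      have hk0 : (0 : ℝ) < k := lt_trans hN0 hk
      apply setIntegral_nonneg measurableSet_Ioi
      intro p hp
      have hp0 : (0 : ℝ) < p := lt_trans hN0 hp
      positivity
    · filter_upwards [ae_restrict_mem measurableSet_Ioi] with k hk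
      calc _ ≤ (1 / 4) * k ^ (α - 2) * N ^ (-1 : ℝ) := hinner k hk
        _ = (1 / 4) * N ^ (-1 : ℝ) * k ^ (α - 2) := by ring
  have hfinal : (1 / 4) * N ^ (-1 : ℝ) * (N ^ (α - 1) / (1 - α))
      < 1 / ((1 - α) * N ^ (2 - α)) := by
    have key : N ^ (-1 : ℝ) * N ^ (α - 1) = (N ^ (2 - α))⁻¹ := by
      rw [← Real.rpow_add hN0, ← Real.rpow_neg hN0.le]; ring_nf
    have e : (1/4:ℝ) * N ^ (-1:ℝ) * (N ^ (α-1) / (1-α))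
        = (N ^ (-1:ℝ) * N ^ (α-1)) * ((1/4) / (1-α)) := by ring
    have h1α : (0:ℝ) < 1 - α := by linarith
    have h2N : (0:ℝ) < N ^ (2 - α) := Real.rpow_pos_of_pos hN0 _
    rw [e, key, show (1:ℝ)/((1-α)*N^(2-α)) = (N^(2-α))⁻¹ * ((1:ℝ)/(1-α)) by
      field_simp]
    apply mul_lt_mul_of_pos_left _ (by positivity)
    rw [div_div]
    exact one_div_lt_one_div_of_lt h1α (by linarith)
  linarith
end
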